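/- Let q be a prime power, m ≥ 1, and let d_1, d_2 be positive integers. Then the componentwise (Schur) product of the projective Reed–Muller codes PRM_{d_1}(q,m) and PRM_{d_2}(q,m) equals PRM_{d_1+d_2}(q,m). -/

import Mathlib

open Pointwise

/-- `Q` is the standard representative of a point of `P^m`: its leftmost
nonzero coordinate equals `1`. -/
def IsStdRep {F : Type*} [Field F] {m : ℕ} (Q : Fin (m + 1) → F) : Prop :=
  ∃ i : Fin (m + 1), Q i = 1 ∧ ∀ j : Fin (m + 1), j < i → Q j = 0

/-- The projective Reed–Muller code of degree `d`: the span of the evaluations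
of homogeneous polynomials of degree `d` at the standard representatives of
`P^m`. -/
def PRM (F : Type*) [Field F] (m d : ℕ) :
    Submodule F ({Q : Fin (m + 1) → F // IsStdRep Q} → F) :=
  Submodule.span F {c | ∃ f : MvPolynomial (Fin (m + 1)) F,
    f.IsHomogeneous d ∧ c = fun Q => MvPolynomial.eval Q.1 f}

lemma aux_degree_add {σ : Type*} (a b : σ →₀ ℕ) :
    (a + b).degree = a.degree + b.degree := by
  classical
  simp only [Finsupp.degree_eq_weight_one, map_add]

lemma aux_degree_single {σ : Type*} (i : σ) : (Finsupp.single i 1).degree = 1 := by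
  classical
  exact Finsupp.degree_single i 1

lemma aux_exists_le {σ : Type*} (s : σ →₀ ℕ) :
    ∀ k : ℕ, k ≤ s.degree → ∃ t : σ →₀ ℕ, t ≤ s ∧ t.degree = k := by
  classical
  intro k
  induction k with
  | zero => intro _; exact ⟨0, zero_le, map_zero Finsupp.degree⟩
  | succ k ih =>
    intro hk
    obtain ⟨t, hts, htd⟩ := ih (Nat.le_of_succ_le hk)
    have hne : ∃ i, t i < s i := by
      by_contra h
      push_neg at h
      have hts' : t = s := by
        ext i
        exact le_antisymm (Finsupp.le_def.mp hts i) (h i)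
      rw [hts'] at htd
      omega
    obtain ⟨i, hi⟩ := hne
    refine ⟨t + Finsupp.single i 1, ?_, ?_⟩
    · rw [Finsupp.le_def]
      intro j
      by_cases hj : j = i
      · subst hj; simp only [Finsupp.add_apply, Finsupp.single_eq_same]; omega
      · simp only [Finsupp.add_apply, Finsupp.single_apply, if_neg (Ne.symm hj),
          add_zero]
        exact Finsupp.le_def.mp hts j
    · rw [aux_degree_add, htd, aux_degree_single]

lemma aux_split {σ : Type*} (s : σ →₀ ℕ) (d₁ d₂ : ℕ) (h : s.degree = d₁ + d₂) :
    ∃ t u : σ →₀ ℕ, s = t + u ∧ t.degree = d₁ ∧ u.degree = d₂ := by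
  obtain ⟨t, hts, htd⟩ := aux_exists_le s d₁ (by omega)
  refine ⟨t, s - t, ?_, htd, ?_⟩
  · rw [add_tsub_cancel_of_le hts]
  · have h2 := aux_degree_add t (s - t)
    rw [add_tsub_cancel_of_le hts] at h2
    omega

/-- The Schur (componentwise) product of the projective
Reed–Muller codes of degrees `d₁` and `d₂` equals the projective Reed–Muller
code of degree `d₁ + d₂`. -/
theorem schur_product_PRM (F : Type*) [Field F] [Fintype F] (m d₁ d₂ : ℕ)
    (hm : 1 ≤ m) (hd₁ : 0 < d₁) (hd₂ : 0 < d₂) :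
    Submodule.span F {u : {Q : Fin (m + 1) → F // IsStdRep Q} → F |
        ∃ a ∈ PRM F m d₁, ∃ b ∈ PRM F m d₂, u = a * b} =
      PRM F m (d₁ + d₂) := by
  classical
  set S₁ : Set ({Q : Fin (m + 1) → F // IsStdRep Q} → F) :=
    {c | ∃ f : MvPolynomial (Fin (m + 1)) F,
      f.IsHomogeneous d₁ ∧ c = fun Q => MvPolynomial.eval Q.1 f} with hS₁
  set S₂ : Set ({Q : Fin (m + 1) → F // IsStdRep Q} → F) :=
    {c | ∃ f : MvPolynomial (Fin (m + 1)) F,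
      f.IsHomogeneous d₂ ∧ c = fun Q => MvPolynomial.eval Q.1 f} with hS₂
  have hset : {u : {Q : Fin (m + 1) → F // IsStdRep Q} → F |
      ∃ a ∈ PRM F m d₁, ∃ b ∈ PRM F m d₂, u = a * b} =
      (((PRM F m d₁ : Set ({Q : Fin (m + 1) → F // IsStdRep Q} → F)) *
        (PRM F m d₂ : Set ({Q : Fin (m + 1) → F // IsStdRep Q} → F))) :
          Set ({Q : Fin (m + 1) → F // IsStdRep Q} → F)) := by
    ext u
    simp only [Set.mem_setOf_eq, Set.mem_mul, SetLike.mem_coe]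
    constructor
    · rintro ⟨a, ha, b, hb, rfl⟩; exact ⟨a, ha, b, hb, rfl⟩
    · rintro ⟨a, ha, b, hb, rfl⟩; exact ⟨a, ha, b, hb, rfl⟩
  rw [hset, ← Submodule.mul_eq_span_mul_set,
    show PRM F m d₁ = Submodule.span F S₁ from rfl,
    show PRM F m d₂ = Submodule.span F S₂ from rfl,
    Submodule.span_mul_span]
  apply le_antisymm
  · rw [Submodule.span_le]
    rintro x ⟨c₁, ⟨f, hf, rfl⟩, c₂, ⟨g, hg, rfl⟩, rfl⟩
    apply Submodule.subset_span
    refine ⟨f * g, hf.mul hg, ?_⟩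
    funext Q
    simp
  · rw [PRM, Submodule.span_le]
    rintro c ⟨f, hf, rfl⟩
    have hrep : (fun Q : {Q : Fin (m + 1) → F // IsStdRep Q} => MvPolynomial.eval Q.1 f) =
        ∑ s ∈ f.support, MvPolynomial.coeff s f •
          (fun Q : {Q : Fin (m + 1) → F // IsStdRep Q} =>
            MvPolynomial.eval Q.1 (MvPolynomial.monomial s 1)) := by
      funext Q
      rw [MvPolynomial.eval_eq']
      simp [MvPolynomial.eval_monomial, Finset.sum_apply]
    rw [hrep]
    apply Submodule.sum_mem
    intro s hs
    apply Submodule.smul_mem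
    apply Submodule.subset_span
    have hdeg : s.degree = d₁ + d₂ := by
      have h1 := hf (MvPolynomial.mem_support_iff.mp hs)
      rw [Finsupp.degree_eq_weight_one]; exact h1
    obtain ⟨t, u, rfl, ht, hu⟩ := aux_split s d₁ d₂ hdeg
    refine ⟨_, ⟨MvPolynomial.monomial t 1, MvPolynomial.isHomogeneous_monomial 1 ht, rfl⟩,
      _, ⟨MvPolynomial.monomial u 1, MvPolynomial.isHomogeneous_monomial 1 hu, rfl⟩, ?_⟩
    funext Q
    show MvPolynomial.eval Q.1 (MvPolynomial.monomial t 1) *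
        MvPolynomial.eval Q.1 (MvPolynomial.monomial u 1) =
      MvPolynomial.eval Q.1 (MvPolynomial.monomial (t + u) 1)
    rw [← map_mul, MvPolynomial.monomial_mul, one_mul]
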